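/- arXiv:2410.18880 — 2 statements merged into one kernel-verified Lean document; each statement's English description precedes it below -/
import Mathlib

section
/- Let X = (X₁, …, Xₙ) be a random vector in ℝⁿ whose coordinates Xᵢ are independent random variables, each with a symmetric distribution. Let θ = (θ₁, …, θₙ) be a random vector taking values in {−1, 1}ⁿ whose value is a measurable function of the vector of absolute values (|X₁|, …, |Xₙ|). Then the random vector (θ₁X₁, …, θₙXₙ) has the same distribution as X. -/
open MeasureTheory ProbabilityTheory

theorem sign_flipping {n : ℕ} {Ω : Type*} [MeasurableSpace Ω]
    (P : Measure Ω) [IsProbabilityMeasure P]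
    (X : Ω → Fin n → ℝ) (hX : Measurable X)
    (hindep : iIndepFun (fun i ω => X ω i) P)
    (hsymm : ∀ i : Fin n, P.map (fun ω => X ω i) = P.map (fun ω => -X ω i))
    (θ : Ω → Fin n → ℝ) (hθval : ∀ ω i, θ ω i = 1 ∨ θ ω i = -1)
    (g : (Fin n → ℝ) → (Fin n → ℝ)) (hg : Measurable g)
    (hθ : ∀ ω, θ ω = g (fun i => |X ω i|)) :
    P.map (fun ω i => θ ω i * X ω i) = P.map X := by
  classical
  have hXi : ∀ i, Measurable (fun ω => X ω i) := fun i => (measurable_pi_apply i).comp hX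
  set ν : Fin n → Measure ℝ := fun i => P.map (fun ω => X ω i) with hν
  have hνP : ∀ i, IsProbabilityMeasure (ν i) :=
    fun i => Measure.isProbabilityMeasure_map (hXi i).aemeasurable
  haveI hνS : ∀ i, SigmaFinite (ν i) := fun i => by haveI := hνP i; infer_instance
  set μ : Measure (Fin n → ℝ) := P.map X with hμ
  -- the law of X is the product of the marginals
  have hpi : Measure.pi ν = μ := by
    refine Measure.pi_eq fun s hs => ?_
    rw [hμ, Measure.map_apply hX (MeasurableSet.univ_pi hs)]
    have hset : X ⁻¹' Set.pi Set.univ s = ⋂ i ∈ Finset.univ, (fun ω => X ω i) ⁻¹' s i := by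
      ext ω; simp [Set.mem_pi]
    rw [hset, hindep.measure_inter_preimage_eq_mul Finset.univ (fun i _ => hs i)]
    simp_rw [hν, Measure.map_apply (hXi _) (hs _)]
  -- marginals are symmetric
  have hneg : ∀ i, MeasurePreserving (fun x : ℝ => -x) (ν i) (ν i) := by
    intro i
    refine ⟨measurable_neg, ?_⟩
    rw [hν, Measure.map_map measurable_neg (hXi i)]
    exact ((hsymm i).symm : P.map (fun ω => -X ω i) = _)
  -- sign vectors
  set r : (Fin n → Bool) → Fin n → ℝ := fun s i => if s i then 1 else -1 with hr
  have hrinj : Function.Injective r := by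
    intro s t h
    funext i
    have hi := congrFun h i
    cases hs : s i <;> cases ht : t i <;> simp [hr, hs, ht] at hi ⊢ <;> norm_num at hi
  set T : (Fin n → Bool) → (Fin n → ℝ) → Fin n → ℝ := fun s x i => r s i * x i with hT
  have hTpres : ∀ s, MeasurePreserving (T s) μ μ := by
    intro s
    have hfi : ∀ i, MeasurePreserving (fun x : ℝ => r s i * x) (ν i) (ν i) := by
      intro i
      cases hsi : s i
      · have : (fun x : ℝ => r s i * x) = fun x : ℝ => -x := by
          funext x; simp [hr, hsi]
        rw [this]; exact hneg i
      · have : (fun x : ℝ => r s i * x) = id := by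
          funext x; simp [hr, hsi]
        rw [this]; exact MeasurePreserving.id _
    have := measurePreserving_pi ν ν hfi
    rwa [hpi] at this
  -- the sign-flip map on ℝⁿ
  set Φ : (Fin n → ℝ) → Fin n → ℝ := fun x i => g (fun j => |x j|) i * x i with hΦdef
  have habs : Measurable (fun x : Fin n → ℝ => fun j => |x j|) :=
    measurable_pi_lambda _ fun j => (measurable_pi_apply j).abs
  have hΦ : Measurable Φ :=
    measurable_pi_lambda _ fun i =>
      ((measurable_pi_apply i).comp (hg.comp habs)).mul (measurable_pi_apply i)
  have hcomp : (fun ω i => θ ω i * X ω i) = Φ ∘ X := by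
    funext ω
    show (fun i => θ ω i * X ω i) = Φ (X ω)
    rw [hθ ω]
  rw [hcomp, ← Measure.map_map hΦ hX]
  -- it remains to show μ.map Φ = μ
  show μ.map Φ = μ
  set G : (Fin n → Bool) → Set (Fin n → ℝ) :=
    fun s => (fun x : Fin n → ℝ => g fun j => |x j|) ⁻¹' {r s} with hG
  have hGmeas : ∀ s, MeasurableSet (G s) :=
    fun s => (hg.comp habs) (measurableSet_singleton (r s))
  have hGdisj : Pairwise (Function.onFun Disjoint G) := by
    intro s t hst
    refine Set.disjoint_left.2 fun x hxs hxt => hst ?_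
    exact hrinj (hxs.symm.trans hxt)
  have hXE : ∀ ω, X ω ∈ ⋃ s, G s := by
    intro ω
    refine Set.mem_iUnion.2 ⟨fun i => decide (g (fun j => |X ω j|) i = 1), ?_⟩
    show g (fun j => |X ω j|) = _
    funext i
    have h := hθval ω i
    rw [hθ ω] at h
    rcases h with h | h <;> simp [hr, h] <;> norm_num
  have hEc : μ (⋃ s, G s)ᶜ = 0 := by
    rw [hμ, Measure.map_apply hX (MeasurableSet.iUnion hGmeas).compl]
    have : X ⁻¹' (⋃ s, G s)ᶜ = ∅ :=
      Set.eq_empty_of_forall_notMem fun ω hω => hω (hXE ω)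
    rw [this]; simp
  -- key set identity
  have hterm : ∀ (A : Set (Fin n → ℝ)) s, (Φ ⁻¹' A) ∩ G s = T s ⁻¹' (A ∩ G s) := by
    intro A s
    have habsT : ∀ x : Fin n → ℝ, (fun j => |T s x j|) = fun j => |x j| := by
      intro x; funext j
      cases hj : s j <;> simp [hT, hr, hj, neg_one_mul, abs_neg]
    ext x
    simp only [Set.mem_inter_iff, Set.mem_preimage, hG, Set.mem_singleton_iff]
    constructor
    · rintro ⟨hxA, hxG⟩
      have hΦT : Φ x = T s x := by
        funext i
        show g (fun j => |x j|) i * x i = r s i * x i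
        rw [hxG]
      have hTG : g (fun j => |T s x j|) = r s := by rw [habsT x]; exact hxG
      exact ⟨hΦT ▸ hxA, hTG⟩
    · rintro ⟨hTA, hTG⟩
      have hxG : g (fun j => |x j|) = r s := by rw [← habsT x]; exact hTG
      have hΦT : Φ x = T s x := by
        funext i
        show g (fun j => |x j|) i * x i = r s i * x i
        rw [hxG]
      exact ⟨by rw [hΦT]; exact hTA, hxG⟩
    -- done
  ext A hA
  rw [Measure.map_apply hΦ hA]
  calc μ (Φ ⁻¹' A) = μ ((Φ ⁻¹' A) ∩ ⋃ s, G s) := (measure_inter_conull hEc).symm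
    _ = μ (⋃ s, (Φ ⁻¹' A) ∩ G s) := by rw [Set.inter_iUnion]
    _ = ∑' s, μ ((Φ ⁻¹' A) ∩ G s) := by
        refine measure_iUnion ?_ fun s => (hΦ hA).inter (hGmeas s)
        intro s t hst
        exact (hGdisj hst).mono Set.inter_subset_right Set.inter_subset_right
    _ = ∑' s, μ (T s ⁻¹' (A ∩ G s)) := by simp_rw [hterm A]
    _ = ∑' s, μ (A ∩ G s) := by
        refine tsum_congr fun s => ?_
        exact (hTpres s).measure_preimage (hA.inter (hGmeas s)).nullMeasurableSet
    _ = μ (⋃ s, A ∩ G s) := by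
        refine (measure_iUnion ?_ fun s => hA.inter (hGmeas s)).symm
        intro s t hst
        exact (hGdisj hst).mono Set.inter_subset_right Set.inter_subset_right
    _ = μ (A ∩ ⋃ s, G s) := by rw [Set.inter_iUnion]
    _ = μ A := measure_inter_conull hEc
end

section
/- Let T ⊆ ℝⁿ be a nonempty highly symmetric set, let S = { supp(x) : x ∈ T } be the family of supports of points of T, and for each I ∈ S let ν(I) = min{ ‖x‖₂ : x ∈ T, supp(x) = I } (assume this minimum exists for each I ∈ S). Then: (i) T = { x ∈ ℝⁿ : ∃ I ∈ S with supp(x) = I and ‖x‖₂ ≥ ν(I) }; (ii) the scaled Gaussian width satisfies w̄(T) = E max_{I∈S} ‖X_I‖₂/ν(I), where X is a standard Gaussian random vector in ℝⁿ and X_I denotes the restriction of X to the coordinates in I; and (iii) the inradius satisfies ρ(T) = min_{I∈S} ν(I). -/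
open MeasureTheory ProbabilityTheory Real Set Pointwise
open scoped RealInnerProductSpace

/-- The standard Gaussian measure on `EuclideanSpace ℝ (Fin n)`. -/
noncomputable def stdGaussian (n : ℕ) : Measure (EuclideanSpace ℝ (Fin n)) :=
  (Measure.pi fun _ : Fin n => gaussianReal 0 1).map
    (MeasurableEquiv.toLp 2 (Fin n → ℝ))

/-- The scaled Gaussian width `w̄(T) = E sup_{t ∈ T} ⟪X, t / ‖t‖₂²⟫`. -/
noncomputable def scaledWidth {n : ℕ} (T : Set (EuclideanSpace ℝ (Fin n))) : ℝ :=
  ∫ x, (⨆ t : T, ⟪x, (‖(t : EuclideanSpace ℝ (Fin n))‖ ^ 2)⁻¹ •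
    (t : EuclideanSpace ℝ (Fin n))⟫) ∂(stdGaussian n)

/-- The inradius `ρ(T) = inf_{t ∈ T} ‖t‖₂`. -/
noncomputable def inradius {n : ℕ} (T : Set (EuclideanSpace ℝ (Fin n))) : ℝ :=
  ⨅ t : T, ‖(t : EuclideanSpace ℝ (Fin n))‖

/-- A set `T` is highly symmetric if whenever `x ∈ T` and `y` has the same support as `x`
and at least as large a norm, then `y ∈ T`. -/
def HighlySymmetric {n : ℕ} (T : Set (EuclideanSpace ℝ (Fin n))) : Prop :=
  ∀ x ∈ T, ∀ y : EuclideanSpace ℝ (Fin n),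
    {i : Fin n | y i ≠ 0} = {i : Fin n | x i ≠ 0} → ‖x‖ ≤ ‖y‖ → y ∈ T

/-- Auxiliary: view a plain function as an element of Euclidean space. -/
def toE {n : ℕ} (f : Fin n → ℝ) : EuclideanSpace ℝ (Fin n) := WithLp.toLp 2 f

@[simp] theorem toE_apply {n : ℕ} (f : Fin n → ℝ) (i : Fin n) : toE f i = f i := rfl

theorem highly_symmetric_structure {n : ℕ}
    (T : Set (EuclideanSpace ℝ (Fin n))) (hT : T.Nonempty) (hsym : HighlySymmetric T)
    (𝒮 : Set (Set (Fin n))) (h𝒮 : 𝒮 = {I | ∃ x ∈ T, {i : Fin n | x i ≠ 0} = I})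
    (ν : Set (Fin n) → ℝ)
    (hν : ∀ I ∈ 𝒮, (∃ x ∈ T, {i : Fin n | x i ≠ 0} = I ∧ ‖x‖ = ν I) ∧
      ∀ x ∈ T, {i : Fin n | x i ≠ 0} = I → ν I ≤ ‖x‖) :
    T = {x | ∃ I ∈ 𝒮, {i : Fin n | x i ≠ 0} = I ∧ ν I ≤ ‖x‖} ∧
    scaledWidth T = ∫ x, (⨆ I : 𝒮,
      Real.sqrt (∑ i, Set.indicator (I : Set (Fin n)) (fun j => x j ^ 2) i) /
        ν (I : Set (Fin n))) ∂(stdGaussian n) ∧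
    inradius T = ⨅ I : 𝒮, ν (I : Set (Fin n)) := by
  classical
  obtain ⟨x₀, hx₀T⟩ := hT
  have hmem𝒮 : ∀ x ∈ T, {i : Fin n | x i ≠ 0} ∈ 𝒮 := fun x hx => h𝒮 ▸ ⟨x, hx, rfl⟩
  have hTne : Nonempty T := ⟨⟨x₀, hx₀T⟩⟩
  have h𝒮ne : Nonempty 𝒮 := ⟨⟨_, hmem𝒮 x₀ hx₀T⟩⟩
  have hfin : Finite 𝒮 := (Set.toFinite 𝒮).to_subtype
  -- positivity of ν on nonempty supports
  have hνpos : ∀ I ∈ 𝒮, (I : Set (Fin n)).Nonempty → 0 < ν I := by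
    intro I hI hne
    obtain ⟨⟨y, hyT, hysupp, hynorm⟩, -⟩ := hν I hI
    have hy : y ≠ 0 := by
      rintro rfl
      obtain ⟨i, hi⟩ := hne
      have : i ∈ {i : Fin n | (0 : EuclideanSpace ℝ (Fin n)) i ≠ 0} := hysupp.symm ▸ hi
      simp at this
    rw [← hynorm]; exact norm_pos_iff.mpr hy
  -- part (i)
  have part1 : T = {x | ∃ I ∈ 𝒮, {i : Fin n | x i ≠ 0} = I ∧ ν I ≤ ‖x‖} := by
    ext x
    constructor
    · intro hx
      exact ⟨_, hmem𝒮 x hx, rfl, (hν _ (hmem𝒮 x hx)).2 x hx rfl⟩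
    · rintro ⟨I, hI, hsupp, hle⟩
      obtain ⟨⟨y, hyT, hysupp, hynorm⟩, -⟩ := hν I hI
      exact hsym y hyT x (hsupp.trans hysupp.symm) (hynorm ▸ hle)
  -- part (iii)
  have hbdnorm : BddBelow (Set.range fun t : T => ‖(t : EuclideanSpace ℝ (Fin n))‖) :=
    ⟨0, by rintro _ ⟨t, rfl⟩; positivity⟩
  have part3 : inradius T = ⨅ I : 𝒮, ν (I : Set (Fin n)) := by
    rw [inradius]
    apply le_antisymm
    · apply le_ciInf
      intro I
      obtain ⟨⟨y, hyT, hysupp, hynorm⟩, -⟩ := hν I I.2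
      calc (⨅ t : T, ‖(t : EuclideanSpace ℝ (Fin n))‖) ≤ ‖y‖ := ciInf_le hbdnorm ⟨y, hyT⟩
        _ = ν I := hynorm
    · apply le_ciInf
      intro t
      have hIt := hmem𝒮 t t.2
      calc (⨅ I : 𝒮, ν (I : Set (Fin n))) ≤ ν {i | (t : EuclideanSpace ℝ (Fin n)) i ≠ 0} :=
            ciInf_le ((Set.finite_range _).bddBelow) (⟨_, hIt⟩ : 𝒮)
        _ ≤ ‖(t : EuclideanSpace ℝ (Fin n))‖ := (hν _ hIt).2 t t.2 rfl
  -- norm of indicator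
  have hnormind : ∀ (x : EuclideanSpace ℝ (Fin n)) (I : Set (Fin n)),
      ‖toE (I.indicator (fun i => x i))‖
        = Real.sqrt (∑ i, I.indicator (fun j => x j ^ 2) i) := by
    intro x I
    rw [EuclideanSpace.norm_eq]
    congr 1
    apply Finset.sum_congr rfl
    intro i _
    by_cases hi : i ∈ I <;> simp [Set.indicator_apply, hi, Real.norm_eq_abs, sq_abs]
  -- key pointwise identity
  have key : ∀ x : EuclideanSpace ℝ (Fin n), (∀ i, x i ≠ 0) →
      (⨆ t : T, ⟪x, (‖(t : EuclideanSpace ℝ (Fin n))‖ ^ 2)⁻¹ •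
          (t : EuclideanSpace ℝ (Fin n))⟫)
        = ⨆ I : 𝒮, Real.sqrt (∑ i, Set.indicator (I : Set (Fin n)) (fun j => x j ^ 2) i) /
            ν (I : Set (Fin n)) := by
    intro x hx
    set g : 𝒮 → ℝ := fun I =>
      Real.sqrt (∑ i, Set.indicator (I : Set (Fin n)) (fun j => x j ^ 2) i) /
        ν (I : Set (Fin n)) with hg
    have hgbdd : BddAbove (Set.range g) := (Set.finite_range g).bddAbove
    have hterm : ∀ t : T, ⟪x, (‖(t : EuclideanSpace ℝ (Fin n))‖ ^ 2)⁻¹ •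
        (t : EuclideanSpace ℝ (Fin n))⟫ ≤ ⨆ I : 𝒮, g I := by
      rintro ⟨t, ht⟩
      simp only
      have hJ : {i : Fin n | t i ≠ 0} ∈ 𝒮 := hmem𝒮 t ht
      by_cases h0 : t = 0
      · subst h0
        have h1 : ⟪x, (‖(0 : EuclideanSpace ℝ (Fin n))‖ ^ 2)⁻¹ •
            (0 : EuclideanSpace ℝ (Fin n))⟫ = 0 := by simp
        rw [h1]
        have hset : {i : Fin n | (0 : EuclideanSpace ℝ (Fin n)) i ≠ 0} = (∅ : Set (Fin n)) := by
          ext i; simp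
        have h2 : g ⟨_, hJ⟩ = 0 := by simp [hg, hset]
        calc (0:ℝ) = g ⟨_, hJ⟩ := h2.symm
          _ ≤ ⨆ I : 𝒮, g I := le_ciSup hgbdd _
      · have htn : 0 < ‖t‖ := norm_pos_iff.mpr h0
        have hνt : ν {i : Fin n | t i ≠ 0} ≤ ‖t‖ := (hν _ hJ).2 t ht rfl
        have hJne : ({i : Fin n | t i ≠ 0} : Set (Fin n)).Nonempty := by
          rcases Set.eq_empty_or_nonempty {i : Fin n | t i ≠ 0} with h | h
          · exfalso; apply h0
            ext i
            have := Set.eq_empty_iff_forall_notMem.mp h i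
            simpa using this
          · exact h
        have hνpos' : 0 < ν {i : Fin n | t i ≠ 0} := hνpos _ hJ hJne
        set xJ : EuclideanSpace ℝ (Fin n) :=
          toE (({i : Fin n | t i ≠ 0} : Set (Fin n)).indicator (fun i => x i)) with hxJ
        have hxJnorm : ‖xJ‖ = Real.sqrt (∑ i,
            ({i : Fin n | t i ≠ 0} : Set (Fin n)).indicator (fun j => x j ^ 2) i) :=
          hnormind x _
        have hinner1 : ⟪x, t⟫ = ⟪xJ, t⟫ := by
          simp only [PiLp.inner_apply, RCLike.inner_apply, conj_trivial]
          apply Finset.sum_congr rfl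
          intro i _
          by_cases hi : t i = 0 <;> simp [hxJ, Set.indicator_apply, hi]
        have hCS : ⟪xJ, t⟫ ≤ ‖xJ‖ * ‖t‖ := real_inner_le_norm _ _
        rw [real_inner_smul_right, hinner1]
        calc (‖t‖ ^ 2)⁻¹ * ⟪xJ, t⟫ ≤ (‖t‖ ^ 2)⁻¹ * (‖xJ‖ * ‖t‖) := by
              apply mul_le_mul_of_nonneg_left hCS (by positivity)
          _ = ‖xJ‖ / ‖t‖ := by field_simp
          _ ≤ ‖xJ‖ / ν {i : Fin n | t i ≠ 0} := by gcongr
          _ = g ⟨_, hJ⟩ := by rw [hg]; simp only; rw [hxJnorm]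
          _ ≤ ⨆ I : 𝒮, g I := le_ciSup hgbdd _
    have hbddf : BddAbove (Set.range fun t : T =>
        ⟪x, (‖(t : EuclideanSpace ℝ (Fin n))‖ ^ 2)⁻¹ • (t : EuclideanSpace ℝ (Fin n))⟫) :=
      ⟨⨆ I : 𝒮, g I, by rintro _ ⟨t, rfl⟩; exact hterm t⟩
    apply le_antisymm
    · exact ciSup_le hterm
    · apply ciSup_le
      intro I
      rcases Set.eq_empty_or_nonempty (I : Set (Fin n)) with hIe | hIne
      · have hgI : g I = 0 := by simp [hg, hIe]
        obtain ⟨⟨y, hyT, hysupp, -⟩, -⟩ := hν I I.2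
        have hy0 : y = 0 := by
          ext i
          by_contra hyi
          have h1 : i ∈ {j : Fin n | y j ≠ 0} := by simpa using hyi
          rw [hysupp, hIe] at h1
          exact h1
        rw [hy0] at hyT
        rw [hgI]
        calc (0:ℝ) = ⟪x, (‖(0 : EuclideanSpace ℝ (Fin n))‖ ^ 2)⁻¹ •
              (0 : EuclideanSpace ℝ (Fin n))⟫ := by simp
          _ ≤ _ := le_ciSup hbddf ⟨0, hyT⟩
      · obtain ⟨⟨y, hyT, hysupp, hynorm⟩, -⟩ := hν I I.2
        have hνIpos : 0 < ν I := hνpos I I.2 hIne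
        set xI : EuclideanSpace ℝ (Fin n) :=
          toE ((I : Set (Fin n)).indicator (fun i => x i)) with hxI
        have hxIapp : ∀ i, xI i = if i ∈ (I : Set (Fin n)) then x i else 0 := fun i =>
          Set.indicator_apply (I : Set (Fin n)) (fun i => x i) i
        have hxIne : xI ≠ 0 := by
          obtain ⟨i, hi⟩ := hIne
          intro h
          have h2 : xI i ≠ 0 := by rw [hxIapp, if_pos hi]; exact hx i
          apply h2
          rw [h]
          simp
        have hxInorm : 0 < ‖xI‖ := norm_pos_iff.mpr hxIne
        have hcpos : 0 < ν I / ‖xI‖ := div_pos hνIpos hxInorm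
        set t : EuclideanSpace ℝ (Fin n) := (ν I / ‖xI‖) • xI with htdef
        have htnorm : ‖t‖ = ν (I : Set (Fin n)) := by
          rw [htdef, norm_smul, Real.norm_eq_abs, abs_of_pos hcpos]
          field_simp
        have htsupp : {i : Fin n | t i ≠ 0} = (I : Set (Fin n)) := by
          ext i
          simp only [htdef, Set.mem_setOf_eq, PiLp.smul_apply, smul_eq_mul, mul_ne_zero_iff]
          constructor
          · rintro ⟨-, h2⟩
            by_contra hi
            rw [hxIapp, if_neg hi] at h2
            exact h2 rfl
          · intro hi
            exact ⟨hcpos.ne', by rw [hxIapp, if_pos hi]; exact hx i⟩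
        have htT : t ∈ T := hsym y hyT t (htsupp.trans hysupp.symm)
          (le_of_eq (hynorm.trans htnorm.symm))
        have hinner2 : ⟪x, xI⟫ = ‖xI‖ ^ 2 := by
          rw [← real_inner_self_eq_norm_sq]
          simp only [PiLp.inner_apply, RCLike.inner_apply, conj_trivial]
          apply Finset.sum_congr rfl
          intro i _
          by_cases hi : i ∈ (I : Set (Fin n)) <;> simp [hxIapp i, hi]
        have hft : ⟪x, (‖t‖ ^ 2)⁻¹ • t⟫ = ‖xI‖ / ν (I : Set (Fin n)) := by
          rw [real_inner_smul_right, htnorm, htdef, real_inner_smul_right, hinner2]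
          field_simp
        have hgval : g I = ‖xI‖ / ν (I : Set (Fin n)) := by
          rw [hg]
          simp only
          rw [hnormind x I]
        calc g I = ⟪x, (‖t‖ ^ 2)⁻¹ • t⟫ := by rw [hft, hgval]
          _ ≤ _ := le_ciSup hbddf ⟨t, htT⟩
  -- a.e. all coordinates nonzero
  have hae : ∀ᵐ x ∂(stdGaussian n), ∀ i, x i ≠ 0 := by
    rw [ae_all_iff]
    intro i
    haveI hNA : NullSingletonClass (gaussianReal (0:ℝ) 1) :=
      ⟨fun x => (gaussianReal_absolutelyContinuous 0 one_ne_zero) (measure_singleton x)⟩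
    rw [ae_iff]
    have hs : {x : EuclideanSpace ℝ (Fin n) | ¬ x i ≠ 0} = {x | x i = 0} := by ext; simp
    rw [hs]
    unfold _root_.stdGaussian
    rw [MeasurableEquiv.map_apply]
    exact Measure.pi_hyperplane _ i 0
  refine ⟨part1, ?_, part3⟩
  unfold scaledWidth
  refine integral_congr_ae ?_
  filter_upwards [hae] with x hx
  exact key x hx
end
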